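/- Let V, h, l be real vector spaces, {,} : h × h → l bilinear, ⟨,⟩_h a symmetric bilinear form on h, ⟨,⟩_l a symmetric bilinear form on l, and η₁, η₂ : l × h → h bilinear maps satisfying ⟨{Y, Y'}, Z⟩_l = −⟨Y, η₁(Z, Y')⟩_h = −⟨Y', η₂(Z, Y)⟩_h for all Y, Y' ∈ h and Z ∈ l. For an l-valued alternating q-form C and an h-valued alternating t-form B on V define η̄ᵢ(C, B) := C ∧_{ηᵢ} B (an h-valued (q+t)-form). Then for h-valued forms B₁, B₂ of degrees t₁, t₂ and an l-valued q-form C, ⟨B₁ ∧^{{,}} B₂, C⟩ = (−1)^{t₂q+1} ⟨B₁, η̄₁(C, B₂)⟩ = (−1)^{t₁(t₂+q)+1} ⟨B₂, η̄₂(C, B₁)⟩, where ⟨,⟩ on forms denotes wedge along ⟨,⟩_l (when both arguments are l-valued) or along ⟨,⟩_h (when both are h-valued). -/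

import Mathlib

/-! Wedge product of vector-valued alternating forms along a bilinear map,
given by the shuffle-sum formula
`(ω ∧_μ η)(v₁,…,v_{k₁+k₂}) = Σ_σ sgn(σ) μ(ω(v_{σ(1)},…,v_{σ(k₁)}), η(v_{σ(k₁+1)},…,v_{σ(k₁+k₂)}))`,
the sum ranging over (k₁,k₂)-shuffles σ. -/

/-- The finset of (k₁,k₂)-shuffles: permutations of `Fin (k₁+k₂)` that are strictly
increasing on the first `k₁` indices and on the last `k₂` indices. -/
def shuffleSet (k₁ k₂ : ℕ) : Finset (Equiv.Perm (Fin (k₁ + k₂))) :=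
  Finset.univ.filter fun σ =>
    (∀ i j : Fin k₁, i < j → σ (Fin.castAdd k₂ i) < σ (Fin.castAdd k₂ j)) ∧
    (∀ i j : Fin k₂, i < j → σ (Fin.natAdd k₁ i) < σ (Fin.natAdd k₁ j))

/-- The wedge product along a bilinear map `μ : E →ₗ F →ₗ W`, defined on the underlying
functions of vector-valued forms by the shuffle-sum formula. -/
def wedgeRaw {V E F W : Type*} [AddCommGroup E] [Module ℝ E] [AddCommGroup F] [Module ℝ F]
    [AddCommGroup W] [Module ℝ W] {k₁ k₂ : ℕ}
    (μ : E →ₗ[ℝ] F →ₗ[ℝ] W)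
    (ω : (Fin k₁ → V) → E) (η : (Fin k₂ → V) → F) :
    (Fin (k₁ + k₂) → V) → W :=
  fun v => ∑ σ ∈ shuffleSet k₁ k₂,
    (Equiv.Perm.sign σ : ℤ) •
      μ (ω fun i => v (σ (Fin.castAdd k₂ i))) (η fun i => v (σ (Fin.natAdd k₁ i)))

/-- Reinterpret a `k`-form as a `k'`-form along an equality of degrees `k = k'`. -/
def castRaw {V W : Type*} {k k' : ℕ} (h : k = k') (ω : (Fin k → V) → W) :
    (Fin k' → V) → W :=
  fun v => ω fun i => v (Fin.cast h i)


namespace S12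
open Equiv Finset

variable {a b : ℕ}

def extLR (π : Perm (Fin a)) (ρ : Perm (Fin b)) : Perm (Fin (a + b)) :=
  finSumFinEquiv.permCongr (π.sumCongr ρ)

@[simp] lemma extLR_castAdd (π : Perm (Fin a)) (ρ : Perm (Fin b)) (i : Fin a) :
    extLR π ρ (Fin.castAdd b i) = Fin.castAdd b (π i) := by
  simp [extLR, Equiv.permCongr_apply]

@[simp] lemma extLR_natAdd (π : Perm (Fin a)) (ρ : Perm (Fin b)) (j : Fin b) :
    extLR π ρ (Fin.natAdd a j) = Fin.natAdd a (ρ j) := by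
  simp [extLR, Equiv.permCongr_apply]

lemma sign_extLR (π : Perm (Fin a)) (ρ : Perm (Fin b)) :
    Perm.sign (extLR π ρ) = Perm.sign π * Perm.sign ρ := by
  rw [extLR, Perm.sign_permCongr, Perm.sign_sumCongr]

lemma mem_shuffleSet_iff {σ : Perm (Fin (a + b))} :
    σ ∈ shuffleSet a b ↔ StrictMono (fun i : Fin a => σ (Fin.castAdd b i)) ∧
      StrictMono (fun j : Fin b => σ (Fin.natAdd a j)) := by
  constructor
  · intro hσ
    rw [shuffleSet, Finset.mem_filter] at hσ
    exact ⟨fun i j hij => hσ.2.1 i j hij, fun i j hij => hσ.2.2 i j hij⟩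
  · intro h
    rw [shuffleSet, Finset.mem_filter]
    exact ⟨Finset.mem_univ _, fun i j hij => h.1 hij, fun i j hij => h.2 hij⟩

lemma range_natAdd_eq_compl (σ : Perm (Fin (a + b))) :
    Set.range (fun j : Fin b => σ (Fin.natAdd a j)) =
      (Set.range (fun i : Fin a => σ (Fin.castAdd b i)))ᶜ := by
  ext x
  simp only [Set.mem_range, Set.mem_compl_iff, not_exists]
  constructor
  · rintro ⟨j, rfl⟩ i hi
    have h2 := σ.injective hi.symm
    have := congrArg Fin.val h2
    simp [Fin.coe_castAdd, Fin.coe_natAdd] at this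
    omega
  · intro hx
    obtain ⟨y, rfl⟩ := σ.surjective x
    induction y using Fin.addCases with
    | left i => exact absurd rfl (hx i)
    | right j => exact ⟨j, rfl⟩

lemma shuffle_unique {s s' : Perm (Fin (a + b))} (hs : s ∈ shuffleSet a b)
    (hs' : s' ∈ shuffleSet a b)
    (hr : Set.range (fun i : Fin a => s (Fin.castAdd b i)) =
      Set.range (fun i : Fin a => s' (Fin.castAdd b i))) : s = s' := by
  rw [mem_shuffleSet_iff] at hs hs'
  haveI : WellFoundedLT (Fin a) := inferInstance
  haveI : WellFoundedLT (Fin b) := inferInstance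
  have h1 : (fun i : Fin a => s (Fin.castAdd b i)) = fun i : Fin a => s' (Fin.castAdd b i) :=
    (StrictMono.range_inj (β := Fin a) hs.1 hs'.1).mp hr
  have h2 : (fun j : Fin b => s (Fin.natAdd a j)) = fun j : Fin b => s' (Fin.natAdd a j) :=
    (StrictMono.range_inj (β := Fin b) hs.2 hs'.2).mp
      (by rw [range_natAdd_eq_compl, range_natAdd_eq_compl, hr])
  ext x
  refine Fin.addCases (fun i => ?_) (fun j => ?_) x
  exacts [congrArg Fin.val (congrFun h1 i), congrArg Fin.val (congrFun h2 j)]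

noncomputable def toShuffle (S : Finset (Fin (a + b))) (hSa : S.card = a) (hSb : Sᶜ.card = b) :
    Perm (Fin (a + b)) :=
  Equiv.ofBijective
    (fun x => Sum.elim (S.orderEmbOfFin hSa) (Sᶜ.orderEmbOfFin hSb) (finSumFinEquiv.symm x))
    (by
      apply Finite.injective_iff_bijective.mp
      intro x y hxy
      have hxy' : Sum.elim (⇑(S.orderEmbOfFin hSa)) (⇑(Sᶜ.orderEmbOfFin hSb))
          (finSumFinEquiv.symm x)
          = Sum.elim (⇑(S.orderEmbOfFin hSa)) (⇑(Sᶜ.orderEmbOfFin hSb))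
          (finSumFinEquiv.symm y) := hxy
      apply finSumFinEquiv.symm.injective
      rcases hu : finSumFinEquiv.symm x with i | i <;>
        rcases hw : finSumFinEquiv.symm y with j | j <;>
        rw [hu, hw] at hxy' <;> simp only [Sum.elim_inl, Sum.elim_inr] at hxy'
      · exact congrArg Sum.inl ((S.orderEmbOfFin hSa).injective hxy')
      · have m1 : (S.orderEmbOfFin hSa) i ∈ S := S.orderEmbOfFin_mem hSa i
        have m2 : (Sᶜ.orderEmbOfFin hSb) j ∈ Sᶜ := Sᶜ.orderEmbOfFin_mem hSb j
        rw [hxy'] at m1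
        rw [Finset.mem_compl] at m2
        exact absurd m1 m2
      · have m1 : (S.orderEmbOfFin hSa) j ∈ S := S.orderEmbOfFin_mem hSa j
        have m2 : (Sᶜ.orderEmbOfFin hSb) i ∈ Sᶜ := Sᶜ.orderEmbOfFin_mem hSb i
        rw [← hxy'] at m1
        rw [Finset.mem_compl] at m2
        exact absurd m1 m2
      · exact congrArg Sum.inr ((Sᶜ.orderEmbOfFin hSb).injective hxy'))

lemma toShuffle_castAdd (S : Finset (Fin (a + b))) (hSa : S.card = a) (hSb : Sᶜ.card = b)
    (i : Fin a) : toShuffle S hSa hSb (Fin.castAdd b i) = S.orderEmbOfFin hSa i := by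
  simp [toShuffle]

lemma toShuffle_natAdd (S : Finset (Fin (a + b))) (hSa : S.card = a) (hSb : Sᶜ.card = b)
    (j : Fin b) : toShuffle S hSa hSb (Fin.natAdd a j) = Sᶜ.orderEmbOfFin hSb j := by
  simp [toShuffle]

lemma toShuffle_mem (S : Finset (Fin (a + b))) (hSa : S.card = a) (hSb : Sᶜ.card = b) :
    toShuffle S hSa hSb ∈ shuffleSet a b := by
  rw [mem_shuffleSet_iff]
  constructor
  · intro i j hij
    dsimp only
    rw [toShuffle_castAdd, toShuffle_castAdd]
    exact (S.orderEmbOfFin hSa).strictMono hij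
  · intro i j hij
    dsimp only
    rw [toShuffle_natAdd, toShuffle_natAdd]
    exact (Sᶜ.orderEmbOfFin hSb).strictMono hij

lemma toShuffle_range (S : Finset (Fin (a + b))) (hSa : S.card = a) (hSb : Sᶜ.card = b) :
    Set.range (fun i : Fin a => toShuffle S hSa hSb (Fin.castAdd b i)) = ↑S := by
  have : (fun i : Fin a => toShuffle S hSa hSb (Fin.castAdd b i)) = ⇑(S.orderEmbOfFin hSa) := by
    funext i; exact toShuffle_castAdd S hSa hSb i
  rw [this, Finset.range_orderEmbOfFin]

lemma card_shuffleSet : (shuffleSet a b).card = (a + b).choose a := by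
  have key : (shuffleSet a b).card = (Finset.powersetCard a (univ : Finset (Fin (a + b)))).card := by
    apply Finset.card_bij (fun s _ => Finset.univ.image (fun i : Fin a => s (Fin.castAdd b i)))
    · intro s _
      rw [Finset.mem_powersetCard]
      refine ⟨Finset.subset_univ _, ?_⟩
      rw [Finset.card_image_of_injective _ (fun i j hij => by
        have := s.injective hij
        exact Fin.castAdd_injective _ _ this)]
      simp
    · intro s hs s' hs' himg
      apply shuffle_unique hs hs'
      have h2 := congrArg (fun t : Finset (Fin (a + b)) => (t : Set (Fin (a + b)))) himg
      simpa [Set.image_univ] using h2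
    · intro S hS
      rw [Finset.mem_powersetCard] at hS
      have hSa : S.card = a := hS.2
      have hSb : Sᶜ.card = b := by
        rw [Finset.card_compl, hSa]
        simp
      refine ⟨toShuffle S hSa hSb, toShuffle_mem S hSa hSb, ?_⟩
      apply Finset.coe_injective
      have := toShuffle_range S hSa hSb
      simpa [Set.image_univ] using this
  rw [key, Finset.card_powersetCard]
  simp

end S12

namespace S12
open Equiv Finset

section FullSum

variable {V E F W : Type*} [AddCommGroup E] [Module ℝ E] [AddCommGroup F] [Module ℝ F]
  [AddCommGroup W] [Module ℝ W]

/-- The generic summand of the antisymmetrized wedge sum. -/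
def Twedge {a b : ℕ} (μ : E →ₗ[ℝ] F →ₗ[ℝ] W) (ω : (Fin a → V) → E) (η : (Fin b → V) → F)
    (v : Fin (a + b) → V) (σ : Perm (Fin (a + b))) : W :=
  (Perm.sign σ : ℤ) • μ (ω fun i => v (σ (Fin.castAdd b i))) (η fun j => v (σ (Fin.natAdd a j)))

lemma full_sum {a b : ℕ} (μ : E →ₗ[ℝ] F →ₗ[ℝ] W)
    (ω : (Fin a → V) → E) (η : (Fin b → V) → F)
    (hω : ∀ (u : Fin a → V) (π : Perm (Fin a)), ω (u ∘ π) = (Perm.sign π : ℤ) • ω u)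
    (hη : ∀ (u : Fin b → V) (ρ : Perm (Fin b)), η (u ∘ ρ) = (Perm.sign ρ : ℤ) • η u)
    (v : Fin (a + b) → V) :
    (a.factorial * b.factorial) • wedgeRaw μ ω η v
      = ∑ σ : Perm (Fin (a + b)), Twedge μ ω η v σ := by
  classical
  have hterm : ∀ (s : Perm (Fin (a + b))) (π : Perm (Fin a)) (ρ : Perm (Fin b)),
      Twedge μ ω η v (s * extLR π ρ) = Twedge μ ω η v s := by
    intro s π ρ
    unfold Twedge
    have h1 : (fun i => v ((s * extLR π ρ) (Fin.castAdd b i)))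
        = (fun i => v (s (Fin.castAdd b i))) ∘ ⇑π := by
      funext i; simp [Perm.mul_apply]
    have h2 : (fun j => v ((s * extLR π ρ) (Fin.natAdd a j)))
        = (fun j => v (s (Fin.natAdd a j))) ∘ ⇑ρ := by
      funext j; simp [Perm.mul_apply]
    rw [h1, h2, hω, hη, Perm.sign_mul, sign_extLR]
    rcases Int.units_eq_one_or (Perm.sign s) with hs | hs <;>
      rcases Int.units_eq_one_or (Perm.sign π) with hp | hp <;>
      rcases Int.units_eq_one_or (Perm.sign ρ) with hq | hq <;>
      simp [hs, hp, hq, map_neg, LinearMap.neg_apply, neg_smul, one_smul, neg_neg]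
  have hrange : ∀ (t : Perm (Fin (a + b))) (α : Perm (Fin a)) (β : Perm (Fin b)),
      Set.range (fun i : Fin a => (t * extLR α β) (Fin.castAdd b i))
        = Set.range (fun i : Fin a => t (Fin.castAdd b i)) := by
    intro t α β
    have hcomp : (fun i : Fin a => (t * extLR α β) (Fin.castAdd b i))
        = (fun i : Fin a => t (Fin.castAdd b i)) ∘ ⇑α := by
      funext i; simp [Perm.mul_apply]
    rw [hcomp, α.surjective.range_comp]
  have hinj : ∀ (p : Perm (Fin (a + b)) × Perm (Fin a) × Perm (Fin b)),
      p ∈ shuffleSet a b ×ˢ ((univ : Finset (Perm (Fin a))) ×ˢ (univ : Finset (Perm (Fin b)))) →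
      ∀ (p' : Perm (Fin (a + b)) × Perm (Fin a) × Perm (Fin b)),
      p' ∈ shuffleSet a b ×ˢ ((univ : Finset (Perm (Fin a))) ×ˢ (univ : Finset (Perm (Fin b)))) →
      p.1 * extLR p.2.1 p.2.2 = p'.1 * extLR p'.2.1 p'.2.2 → p = p' := by
    rintro ⟨s, π, ρ⟩ hp ⟨s', π', ρ'⟩ hp' heq
    rw [Finset.mem_product] at hp hp'
    simp only at heq
    have hs : s = s' := by
      apply shuffle_unique hp.1 hp'.1
      rw [← hrange s π ρ, ← hrange s' π' ρ', heq]
    subst hs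
    have hE : extLR π ρ = extLR π' ρ' := mul_left_cancel heq
    have hπ : π = π' := by
      apply Equiv.ext; intro i
      have h1 := congrArg (fun σ : Perm (Fin (a + b)) => σ (Fin.castAdd b i)) hE
      simp only [extLR_castAdd] at h1
      have h2 := congrArg Fin.val h1
      simp only [Fin.coe_castAdd] at h2
      exact Fin.ext h2
    have hρ : ρ = ρ' := by
      apply Equiv.ext; intro j
      have h1 := congrArg (fun σ : Perm (Fin (a + b)) => σ (Fin.natAdd a j)) hE
      simp only [extLR_natAdd] at h1
      have h2 := congrArg Fin.val h1
      simp only [Fin.coe_natAdd] at h2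
      exact Fin.ext (by omega)
    rw [hπ, hρ]
  have hcard : (univ : Finset (Perm (Fin (a + b)))).card
      ≤ (shuffleSet a b ×ˢ ((univ : Finset (Perm (Fin a))) ×ˢ (univ : Finset (Perm (Fin b))))).card := by
    rw [Finset.card_product, Finset.card_product, card_shuffleSet, Finset.card_univ,
      Finset.card_univ, Finset.card_univ, Fintype.card_perm, Fintype.card_perm,
      Fintype.card_perm, Fintype.card_fin, Fintype.card_fin, Fintype.card_fin]
    have hc := Nat.choose_mul_factorial_mul_factorial (Nat.le_add_right a b)
    rw [Nat.add_sub_cancel_left] at hc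
    rw [← mul_assoc, hc]
  have key : ∑ p ∈ shuffleSet a b ×ˢ ((univ : Finset (Perm (Fin a))) ×ˢ (univ : Finset (Perm (Fin b)))),
      Twedge μ ω η v (p.1 * extLR p.2.1 p.2.2)
      = ∑ σ : Perm (Fin (a + b)), Twedge μ ω η v σ := by
    apply Finset.sum_bij (fun p _ => p.1 * extLR p.2.1 p.2.2)
    · intro p _; exact Finset.mem_univ _
    · exact hinj
    · intro σ _
      obtain ⟨p, hpmem, hpeq⟩ := Finset.surj_on_of_inj_on_of_card_le
        (fun p (_ : p ∈ shuffleSet a b ×ˢ ((univ : Finset (Perm (Fin a))) ×ˢ (univ : Finset (Perm (Fin b))))) =>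
          p.1 * extLR p.2.1 p.2.2)
        (fun p _ => Finset.mem_univ _) (fun p₁ p₂ h₁ h₂ he => hinj p₁ h₁ p₂ h₂ he) hcard σ (Finset.mem_univ σ)
      exact ⟨p, hpmem, hpeq.symm⟩
    · intro p _; rfl
  rw [← key, Finset.sum_product]
  have key2 : ∀ s ∈ shuffleSet a b,
      (∑ pr ∈ (univ : Finset (Perm (Fin a))) ×ˢ (univ : Finset (Perm (Fin b))),
        Twedge μ ω η v (s * extLR pr.1 pr.2))
      = (a.factorial * b.factorial) • Twedge μ ω η v s := by
    intro s _
    rw [Finset.sum_product]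
    have hconst : ∀ π : Perm (Fin a),
        (∑ ρ : Perm (Fin b), Twedge μ ω η v (s * extLR π ρ))
          = b.factorial • Twedge μ ω η v s := by
      intro π
      rw [Finset.sum_congr rfl (fun ρ _ => hterm s π ρ), Finset.sum_const, Finset.card_univ,
        Fintype.card_perm, Fintype.card_fin]
    rw [Finset.sum_congr rfl (fun π _ => hconst π), Finset.sum_const, Finset.card_univ,
      Fintype.card_perm, Fintype.card_fin, ← mul_smul]
  rw [Finset.sum_congr rfl key2, ← Finset.smul_sum]
  rfl

lemma nsmul_cancel {n : ℕ} (hn : n ≠ 0) {x y : W} (hxy : n • x = n • y) : x = y := by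
  have h' : (n : ℝ) • x = (n : ℝ) • y := by
    rw [Nat.cast_smul_eq_nsmul, Nat.cast_smul_eq_nsmul]; exact hxy
  have h2 := congrArg (fun z : W => ((n : ℝ))⁻¹ • z) h'
  simpa [smul_smul, inv_mul_cancel₀ (show (n : ℝ) ≠ 0 from Nat.cast_ne_zero.mpr hn)] using h2

lemma wedgeRaw_permProp {a b : ℕ} (μ : E →ₗ[ℝ] F →ₗ[ℝ] W)
    (ω : (Fin a → V) → E) (η : (Fin b → V) → F)
    (hω : ∀ (u : Fin a → V) (π : Perm (Fin a)), ω (u ∘ π) = (Perm.sign π : ℤ) • ω u)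
    (hη : ∀ (u : Fin b → V) (ρ : Perm (Fin b)), η (u ∘ ρ) = (Perm.sign ρ : ℤ) • η u)
    (v : Fin (a + b) → V) (π' : Perm (Fin (a + b))) :
    wedgeRaw μ ω η (v ∘ π') = (Perm.sign π' : ℤ) • wedgeRaw μ ω η v := by
  have hN : a.factorial * b.factorial ≠ 0 :=
    Nat.mul_ne_zero (Nat.factorial_ne_zero a) (Nat.factorial_ne_zero b)
  apply nsmul_cancel hN
  rw [full_sum μ ω η hω hη (v ∘ ⇑π'), smul_comm, full_sum μ ω η hω hη v, Finset.smul_sum]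
  apply Fintype.sum_equiv (Equiv.mulLeft π')
  intro σ
  show (Perm.sign σ : ℤ) • μ (ω fun i => (v ∘ ⇑π') (σ (Fin.castAdd b i)))
      (η fun j => (v ∘ ⇑π') (σ (Fin.natAdd a j)))
    = (Perm.sign π' : ℤ) • ((Perm.sign (π' * σ) : ℤ) •
        μ (ω fun i => v ((π' * σ) (Fin.castAdd b i))) (η fun j => v ((π' * σ) (Fin.natAdd a j))))
  rw [Perm.sign_mul]
  rcases Int.units_eq_one_or (Perm.sign π') with h1 | h1 <;>
    rcases Int.units_eq_one_or (Perm.sign σ) with h2 | h2 <;>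
    simp [h1, h2, Function.comp, Perm.mul_apply]

end FullSum
end S12

namespace S12
open Equiv Finset

section Triple

variable {V E F W W' E₁ E₂ : Type*} [AddCommGroup E] [Module ℝ E] [AddCommGroup F] [Module ℝ F]
  [AddCommGroup W] [Module ℝ W] [AddCommGroup W'] [Module ℝ W']
  [AddCommGroup E₁] [Module ℝ E₁] [AddCommGroup E₂] [Module ℝ E₂]

lemma tripleL {a b c : ℕ} (μ₂ : W' →ₗ[ℝ] F →ₗ[ℝ] W) (μ₁ : E₁ →ₗ[ℝ] E₂ →ₗ[ℝ] W')
    (ω₁ : (Fin a → V) → E₁) (ω₂ : (Fin b → V) → E₂) (η : (Fin c → V) → F)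
    (hω₁ : ∀ (u : Fin a → V) (π : Perm (Fin a)), ω₁ (u ∘ π) = (Perm.sign π : ℤ) • ω₁ u)
    (hω₂ : ∀ (u : Fin b → V) (π : Perm (Fin b)), ω₂ (u ∘ π) = (Perm.sign π : ℤ) • ω₂ u)
    (hη : ∀ (u : Fin c → V) (π : Perm (Fin c)), η (u ∘ π) = (Perm.sign π : ℤ) • η u)
    (v : Fin (a + b + c) → V) :
    (a.factorial * b.factorial * c.factorial) • wedgeRaw μ₂ (wedgeRaw μ₁ ω₁ ω₂) η v
      = ∑ σ : Perm (Fin (a + b + c)), (Perm.sign σ : ℤ) •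
          μ₂ (μ₁ (ω₁ fun i => v (σ (Fin.castAdd c (Fin.castAdd b i))))
                 (ω₂ fun j => v (σ (Fin.castAdd c (Fin.natAdd a j)))))
             (η fun k => v (σ (Fin.natAdd (a + b) k))) := by
  classical
  have hW := wedgeRaw_permProp μ₁ ω₁ ω₂ hω₁ hω₂
  have h1 := full_sum μ₂ (wedgeRaw μ₁ ω₁ ω₂) η hW hη v
  have h2 := congrArg (fun x : W => (a.factorial * b.factorial) • x) h1
  rw [← mul_smul, Finset.smul_sum] at h2
  have h3 : ∀ σ : Perm (Fin (a + b + c)),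
      (a.factorial * b.factorial) • Twedge μ₂ (wedgeRaw μ₁ ω₁ ω₂) η v σ
      = ∑ τ : Perm (Fin (a + b)),
          ((Perm.sign σ : ℤ) * (Perm.sign τ : ℤ)) •
            μ₂ (μ₁ (ω₁ fun i => v (σ (Fin.castAdd c (τ (Fin.castAdd b i)))))
                   (ω₂ fun j => v (σ (Fin.castAdd c (τ (Fin.natAdd a j))))))
               (η fun k => v (σ (Fin.natAdd (a + b) k))) := by
    intro σ
    unfold Twedge
    rw [smul_comm, ← LinearMap.smul_apply, ← map_nsmul,
      full_sum μ₁ ω₁ ω₂ hω₁ hω₂ (fun x => v (σ (Fin.castAdd c x))),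
      map_sum, LinearMap.sum_apply, Finset.smul_sum]
    apply Finset.sum_congr rfl
    intro τ _
    unfold Twedge
    rw [map_zsmul, LinearMap.smul_apply, smul_smul]
  rw [show (∑ σ : Perm (Fin (a + b + c)),
        (a.factorial * b.factorial) • Twedge μ₂ (wedgeRaw μ₁ ω₁ ω₂) η v σ)
      = ∑ σ : Perm (Fin (a + b + c)), ∑ τ : Perm (Fin (a + b)),
          ((Perm.sign σ : ℤ) * (Perm.sign τ : ℤ)) •
            μ₂ (μ₁ (ω₁ fun i => v (σ (Fin.castAdd c (τ (Fin.castAdd b i)))))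
                   (ω₂ fun j => v (σ (Fin.castAdd c (τ (Fin.natAdd a j))))))
               (η fun k => v (σ (Fin.natAdd (a + b) k)))
      from Finset.sum_congr rfl fun σ _ => h3 σ, Finset.sum_comm] at h2
  have h4 : ∀ τ : Perm (Fin (a + b)),
      (∑ σ : Perm (Fin (a + b + c)),
          ((Perm.sign σ : ℤ) * (Perm.sign τ : ℤ)) •
            μ₂ (μ₁ (ω₁ fun i => v (σ (Fin.castAdd c (τ (Fin.castAdd b i)))))
                   (ω₂ fun j => v (σ (Fin.castAdd c (τ (Fin.natAdd a j))))))
               (η fun k => v (σ (Fin.natAdd (a + b) k))))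
      = ∑ σ : Perm (Fin (a + b + c)), (Perm.sign σ : ℤ) •
          μ₂ (μ₁ (ω₁ fun i => v (σ (Fin.castAdd c (Fin.castAdd b i))))
                 (ω₂ fun j => v (σ (Fin.castAdd c (Fin.natAdd a j)))))
             (η fun k => v (σ (Fin.natAdd (a + b) k))) := by
    intro τ
    apply Fintype.sum_equiv (Equiv.mulRight (extLR τ (1 : Perm (Fin c))))
    intro σ
    simp only [Equiv.coe_mulRight, Perm.sign_mul, sign_extLR, Perm.mul_apply,
      extLR_castAdd, extLR_natAdd, Perm.one_apply, Units.val_mul, map_one, mul_one]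
  rw [show (∑ τ : Perm (Fin (a + b)), ∑ σ : Perm (Fin (a + b + c)),
        ((Perm.sign σ : ℤ) * (Perm.sign τ : ℤ)) •
          μ₂ (μ₁ (ω₁ fun i => v (σ (Fin.castAdd c (τ (Fin.castAdd b i)))))
                 (ω₂ fun j => v (σ (Fin.castAdd c (τ (Fin.natAdd a j))))))
             (η fun k => v (σ (Fin.natAdd (a + b) k))))
      = ∑ _τ : Perm (Fin (a + b)), ∑ σ : Perm (Fin (a + b + c)), (Perm.sign σ : ℤ) •
          μ₂ (μ₁ (ω₁ fun i => v (σ (Fin.castAdd c (Fin.castAdd b i))))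
                 (ω₂ fun j => v (σ (Fin.castAdd c (Fin.natAdd a j)))))
             (η fun k => v (σ (Fin.natAdd (a + b) k)))
      from Finset.sum_congr rfl fun τ _ => h4 τ, Finset.sum_const, Finset.card_univ,
      Fintype.card_perm, Fintype.card_fin] at h2
  apply nsmul_cancel (n := (a + b).factorial) (Nat.factorial_ne_zero _)
  rw [← mul_smul, show (a + b).factorial * (a.factorial * b.factorial * c.factorial)
    = a.factorial * b.factorial * ((a + b).factorial * c.factorial) from by ring, h2]

lemma tripleR {a b c : ℕ} (μ₂ : E →ₗ[ℝ] W' →ₗ[ℝ] W) (μ₁ : E₁ →ₗ[ℝ] E₂ →ₗ[ℝ] W')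
    (ω : (Fin a → V) → E) (η₁ : (Fin b → V) → E₁) (η₂ : (Fin c → V) → E₂)
    (hω : ∀ (u : Fin a → V) (π : Perm (Fin a)), ω (u ∘ π) = (Perm.sign π : ℤ) • ω u)
    (hη₁ : ∀ (u : Fin b → V) (π : Perm (Fin b)), η₁ (u ∘ π) = (Perm.sign π : ℤ) • η₁ u)
    (hη₂ : ∀ (u : Fin c → V) (π : Perm (Fin c)), η₂ (u ∘ π) = (Perm.sign π : ℤ) • η₂ u)
    (v : Fin (a + (b + c)) → V) :
    (a.factorial * b.factorial * c.factorial) • wedgeRaw μ₂ ω (wedgeRaw μ₁ η₁ η₂) v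
      = ∑ σ : Perm (Fin (a + (b + c))), (Perm.sign σ : ℤ) •
          μ₂ (ω fun i => v (σ (Fin.castAdd (b + c) i)))
             (μ₁ (η₁ fun j => v (σ (Fin.natAdd a (Fin.castAdd c j))))
                 (η₂ fun k => v (σ (Fin.natAdd a (Fin.natAdd b k))))) := by
  classical
  have hW := wedgeRaw_permProp μ₁ η₁ η₂ hη₁ hη₂
  have h1 := full_sum μ₂ ω (wedgeRaw μ₁ η₁ η₂) hω hW v
  have h2 := congrArg (fun x : W => (b.factorial * c.factorial) • x) h1
  rw [← mul_smul, Finset.smul_sum] at h2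
  have h3 : ∀ σ : Perm (Fin (a + (b + c))),
      (b.factorial * c.factorial) • Twedge μ₂ ω (wedgeRaw μ₁ η₁ η₂) v σ
      = ∑ τ : Perm (Fin (b + c)),
          ((Perm.sign σ : ℤ) * (Perm.sign τ : ℤ)) •
            μ₂ (ω fun i => v (σ (Fin.castAdd (b + c) i)))
               (μ₁ (η₁ fun j => v (σ (Fin.natAdd a (τ (Fin.castAdd c j)))))
                   (η₂ fun k => v (σ (Fin.natAdd a (τ (Fin.natAdd b k)))))) := by
    intro σ
    unfold Twedge
    rw [smul_comm, ← map_nsmul,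
      full_sum μ₁ η₁ η₂ hη₁ hη₂ (fun x => v (σ (Fin.natAdd a x))),
      map_sum, Finset.smul_sum]
    apply Finset.sum_congr rfl
    intro τ _
    unfold Twedge
    rw [map_zsmul, smul_smul]
  rw [show (∑ σ : Perm (Fin (a + (b + c))),
        (b.factorial * c.factorial) • Twedge μ₂ ω (wedgeRaw μ₁ η₁ η₂) v σ)
      = ∑ σ : Perm (Fin (a + (b + c))), ∑ τ : Perm (Fin (b + c)),
          ((Perm.sign σ : ℤ) * (Perm.sign τ : ℤ)) •
            μ₂ (ω fun i => v (σ (Fin.castAdd (b + c) i)))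
               (μ₁ (η₁ fun j => v (σ (Fin.natAdd a (τ (Fin.castAdd c j)))))
                   (η₂ fun k => v (σ (Fin.natAdd a (τ (Fin.natAdd b k))))))
      from Finset.sum_congr rfl fun σ _ => h3 σ, Finset.sum_comm] at h2
  have h4 : ∀ τ : Perm (Fin (b + c)),
      (∑ σ : Perm (Fin (a + (b + c))),
          ((Perm.sign σ : ℤ) * (Perm.sign τ : ℤ)) •
            μ₂ (ω fun i => v (σ (Fin.castAdd (b + c) i)))
               (μ₁ (η₁ fun j => v (σ (Fin.natAdd a (τ (Fin.castAdd c j)))))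
                   (η₂ fun k => v (σ (Fin.natAdd a (τ (Fin.natAdd b k)))))))
      = ∑ σ : Perm (Fin (a + (b + c))), (Perm.sign σ : ℤ) •
          μ₂ (ω fun i => v (σ (Fin.castAdd (b + c) i)))
             (μ₁ (η₁ fun j => v (σ (Fin.natAdd a (Fin.castAdd c j))))
                 (η₂ fun k => v (σ (Fin.natAdd a (Fin.natAdd b k))))) := by
    intro τ
    apply Fintype.sum_equiv (Equiv.mulRight (extLR (1 : Perm (Fin a)) τ))
    intro σ
    simp only [Equiv.coe_mulRight, Perm.sign_mul, sign_extLR, Perm.mul_apply,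
      extLR_castAdd, extLR_natAdd, Perm.one_apply, Units.val_mul, map_one, one_mul]
  rw [show (∑ τ : Perm (Fin (b + c)), ∑ σ : Perm (Fin (a + (b + c))),
        ((Perm.sign σ : ℤ) * (Perm.sign τ : ℤ)) •
          μ₂ (ω fun i => v (σ (Fin.castAdd (b + c) i)))
             (μ₁ (η₁ fun j => v (σ (Fin.natAdd a (τ (Fin.castAdd c j)))))
                 (η₂ fun k => v (σ (Fin.natAdd a (τ (Fin.natAdd b k)))))))
      = ∑ _τ : Perm (Fin (b + c)), ∑ σ : Perm (Fin (a + (b + c))), (Perm.sign σ : ℤ) •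
          μ₂ (ω fun i => v (σ (Fin.castAdd (b + c) i)))
             (μ₁ (η₁ fun j => v (σ (Fin.natAdd a (Fin.castAdd c j))))
                 (η₂ fun k => v (σ (Fin.natAdd a (Fin.natAdd b k)))))
      from Finset.sum_congr rfl fun τ _ => h4 τ, Finset.sum_const, Finset.card_univ,
      Fintype.card_perm, Fintype.card_fin] at h2
  apply nsmul_cancel (n := (b + c).factorial) (Nat.factorial_ne_zero _)
  rw [← mul_smul, show (b + c).factorial * (a.factorial * b.factorial * c.factorial)
    = b.factorial * c.factorial * (a.factorial * (b + c).factorial) from by ring, h2]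

end Triple
end S12

namespace S12
open Equiv Finset

section Rot

lemma finRotate_pow_val {n : ℕ} (k : ℕ) :
    ∀ i : Fin n, ((((finRotate n) ^ k) i : Fin n) : ℕ) = ((i : ℕ) + k) % n := by
  induction k with
  | zero => intro i; simp [Nat.mod_eq_of_lt i.isLt]
  | succ k ih =>
    intro i
    cases n with
    | zero => exact i.elim0
    | succ m =>
      rw [pow_succ, Perm.mul_apply, ih, finRotate_succ_apply]
      rcases eq_or_ne i (Fin.last m) with hi | hi
      · subst hi
        rw [Fin.val_add_one, if_pos rfl]
        have h2 : ((Fin.last m : Fin (m + 1)) : ℕ) + (k + 1) = k + (m + 1) := by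
          rw [Fin.val_last]; omega
        rw [h2, Nat.add_mod_right]
        simp
      · rw [Fin.val_add_one, if_neg hi]
        congr 1
        omega

lemma sign_finRotate_pow (n k : ℕ) :
    Perm.sign ((finRotate n) ^ k) = (-1 : ℤˣ) ^ ((n - 1) * k) := by
  cases n with
  | zero =>
    have h1 : (finRotate 0) ^ k = 1 := Subsingleton.elim _ _
    rw [h1]
    simp
  | succ m =>
    rw [map_pow, sign_finRotate, ← pow_mul]

lemma neg_one_pow_congr {s t : ℕ} (hst : s % 2 = t % 2) :
    ((-1 : ℤˣ)) ^ s = (-1 : ℤˣ) ^ t := by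
  rcases Nat.even_or_odd s with hs | hs
  · have ht : Even t := by rw [Nat.even_iff] at *; omega
    rw [hs.neg_one_pow, ht.neg_one_pow]
  · have ht : Odd t := by rw [Nat.odd_iff] at *; omega
    rw [hs.neg_one_pow, ht.neg_one_pow]

lemma parity_helper (t s : ℕ) : ((t + s - 1) * s) % 2 = (t * s) % 2 := by
  rcases Nat.eq_zero_or_pos s with hs | hs
  · subst hs; simp
  · have h1 : (t + s - 1) * s = t * s + (s - 1) * s := by
      rw [← Nat.add_mul]
      congr 1
      omega
    have h2 : Even ((s - 1) * s) := by
      have h3 := Nat.even_mul_succ_self (s - 1)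
      rwa [Nat.sub_add_cancel hs] at h3
    obtain ⟨c, hc⟩ := h2
    rw [h1, hc]
    generalize t * s = m
    omega

variable {q t₁ t₂ : ℕ}

/-- The block permutation used for the first identity: fixes the first `t₁` block and
rotates the remaining `t₂ + q` block by `q`. -/
def u₁ (q t₁ t₂ : ℕ) : Perm (Fin (t₁ + t₂ + q)) :=
  (finCongr (show t₁ + (t₂ + q) = t₁ + t₂ + q by omega)).permCongr
    (extLR (1 : Perm (Fin t₁)) ((finRotate (t₂ + q)) ^ q))

/-- The global rotation used for the second identity. -/
def u₂ (q t₁ t₂ : ℕ) : Perm (Fin (t₁ + t₂ + q)) := (finRotate (t₁ + t₂ + q)) ^ (t₂ + q)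

lemma u₁_val (x : Fin (t₁ + t₂ + q)) :
    ((u₁ q t₁ t₂ x : Fin (t₁ + t₂ + q)) : ℕ)
      = if (x : ℕ) < t₁ then (x : ℕ) else t₁ + (((x : ℕ) - t₁) + q) % (t₂ + q) := by
  unfold u₁
  rw [Equiv.permCongr_apply]
  rcases Nat.lt_or_ge (x : ℕ) t₁ with hx | hx
  · have e1 : (finCongr (show t₁ + (t₂ + q) = t₁ + t₂ + q by omega)).symm x
        = Fin.castAdd (t₂ + q) ⟨(x : ℕ), hx⟩ := by
      apply Fin.ext; simp
    rw [e1, extLR_castAdd]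
    simp [hx]
  · have e1 : (finCongr (show t₁ + (t₂ + q) = t₁ + t₂ + q by omega)).symm x
        = Fin.natAdd t₁ ⟨(x : ℕ) - t₁, by omega⟩ := by
      apply Fin.ext; simp; omega
    rw [e1, extLR_natAdd]
    simp only [finCongr_apply, Fin.coe_cast, Fin.coe_natAdd]
    rw [if_neg (by omega), finRotate_pow_val]

lemma sign_u₁ : Perm.sign (u₁ q t₁ t₂) = (-1 : ℤˣ) ^ (t₂ * q) := by
  unfold u₁
  rw [Perm.sign_permCongr, sign_extLR, map_one, one_mul, sign_finRotate_pow]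
  exact neg_one_pow_congr (parity_helper t₂ q)

lemma sign_u₂ : Perm.sign (u₂ q t₁ t₂) = (-1 : ℤˣ) ^ (t₁ * (t₂ + q)) := by
  unfold u₂
  rw [sign_finRotate_pow]
  have h1 : ((t₁ + t₂ + q - 1) * (t₂ + q)) % 2 = (t₁ * (t₂ + q)) % 2 := by
    have := parity_helper t₁ (t₂ + q)
    have e : t₁ + (t₂ + q) - 1 = t₁ + t₂ + q - 1 := by omega
    rw [e] at this
    exact this
  exact neg_one_pow_congr h1

lemma castEq₁ (q t₁ t₂ : ℕ) : t₁ + (q + t₂) = t₁ + t₂ + q := by omega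

lemma castEq₂ (q t₁ t₂ : ℕ) : t₂ + (q + t₁) = t₁ + t₂ + q := by omega

-- block actions for u₁
lemma u₁_block1 (i : Fin t₁) :
    u₁ q t₁ t₂ (Fin.castAdd q (Fin.castAdd t₂ i))
      = Fin.cast (castEq₁ q t₁ t₂) (Fin.castAdd (q + t₂) i) := by
  apply Fin.ext
  rw [u₁_val]
  simp [i.isLt]

lemma u₁_block2 (j : Fin t₂) :
    u₁ q t₁ t₂ (Fin.castAdd q (Fin.natAdd t₁ j))
      = Fin.cast (castEq₁ q t₁ t₂)
          (Fin.natAdd t₁ (Fin.natAdd q j)) := by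
  apply Fin.ext
  rw [u₁_val]
  have hj : (j : ℕ) < t₂ := j.isLt
  rw [if_neg (by simp only [Fin.coe_castAdd, Fin.coe_natAdd]; omega)]
  simp only [Fin.coe_castAdd, Fin.coe_natAdd, Fin.coe_cast]
  rw [show t₁ + (j : ℕ) - t₁ = (j : ℕ) from by omega, Nat.mod_eq_of_lt (by omega)]
  omega

lemma u₁_block3 (k : Fin q) :
    u₁ q t₁ t₂ (Fin.natAdd (t₁ + t₂) k)
      = Fin.cast (castEq₁ q t₁ t₂)
          (Fin.natAdd t₁ (Fin.castAdd t₂ k)) := by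
  apply Fin.ext
  rw [u₁_val]
  have hk : (k : ℕ) < q := k.isLt
  rw [if_neg (by simp only [Fin.coe_castAdd, Fin.coe_natAdd]; omega)]
  simp only [Fin.coe_natAdd, Fin.coe_cast, Fin.coe_castAdd]
  rw [show t₁ + t₂ + (k : ℕ) - t₁ + q = (k : ℕ) + (t₂ + q) from by omega,
    Nat.add_mod_right, Nat.mod_eq_of_lt (by omega)]

-- block actions for u₂
lemma u₂_block1 (i : Fin t₁) :
    u₂ q t₁ t₂ (Fin.castAdd q (Fin.castAdd t₂ i))
      = Fin.cast (castEq₂ q t₁ t₂)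
          (Fin.natAdd t₂ (Fin.natAdd q i)) := by
  apply Fin.ext
  unfold u₂
  rw [finRotate_pow_val]
  simp only [Fin.coe_castAdd, Fin.coe_natAdd, Fin.coe_cast]
  rw [Nat.mod_eq_of_lt (by omega)]
  omega

lemma u₂_block2 (j : Fin t₂) :
    u₂ q t₁ t₂ (Fin.castAdd q (Fin.natAdd t₁ j))
      = Fin.cast (castEq₂ q t₁ t₂) (Fin.castAdd (q + t₁) j) := by
  apply Fin.ext
  unfold u₂
  rw [finRotate_pow_val]
  simp only [Fin.coe_castAdd, Fin.coe_natAdd, Fin.coe_cast]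
  rw [show t₁ + (j : ℕ) + (t₂ + q) = (j : ℕ) + (t₁ + t₂ + q) from by omega,
    Nat.add_mod_right, Nat.mod_eq_of_lt (by omega)]

lemma u₂_block3 (k : Fin q) :
    u₂ q t₁ t₂ (Fin.natAdd (t₁ + t₂) k)
      = Fin.cast (castEq₂ q t₁ t₂)
          (Fin.natAdd t₂ (Fin.castAdd t₁ k)) := by
  apply Fin.ext
  unfold u₂
  rw [finRotate_pow_val]
  simp only [Fin.coe_natAdd, Fin.coe_cast, Fin.coe_castAdd]
  rw [show t₁ + t₂ + (k : ℕ) + (t₂ + q) = (t₂ + (k : ℕ)) + (t₁ + t₂ + q) from by omega,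
    Nat.add_mod_right, Nat.mod_eq_of_lt (by omega)]

end Rot
end S12

namespace S12
open Equiv Finset

lemma symm_cast {m n : ℕ} (h1 h2 : m = n) (x : Fin m) :
    (finCongr h1).symm (Fin.cast h2 x) = x := Fin.ext (by simp)

lemma sum_reindex {m n : ℕ} (hmn : m = n) (u : Perm (Fin n))
    (f : Perm (Fin n) → ℝ) (g : Perm (Fin m) → ℝ)
    (hfg : ∀ σ : Perm (Fin m), g σ = f ((finCongr hmn).permCongr σ * u)) :
    ∑ σ : Perm (Fin n), f σ = ∑ σ : Perm (Fin m), g σ := by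
  symm
  exact Fintype.sum_equiv ((Equiv.permCongr (finCongr hmn)).trans (Equiv.mulRight u)) g f hfg

end S12


/-- with `{,} : h × h → l` bilinear, `⟨,⟩_h`, `⟨,⟩_l` symmetric bilinear
forms and `η₁, η₂ : l × h → h` bilinear with
`⟨{Y,Y'}, Z⟩_l = −⟨Y, η₁(Z,Y')⟩_h = −⟨Y', η₂(Z,Y)⟩_h`, setting `η̄ᵢ(C,B) := C ∧_{ηᵢ} B`,
for `h`-valued alternating forms `B₁, B₂` of degrees `t₁, t₂` and an `l`-valued
alternating `q`-form `C`,
`⟨B₁ ∧^{{,}} B₂, C⟩ = (−1)^{t₂q+1} ⟨B₁, η̄₁(C,B₂)⟩ = (−1)^{t₁(t₂+q)+1} ⟨B₂, η̄₂(C,B₁)⟩`. -/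
theorem stmt12 {V h l : Type*} [AddCommGroup V] [Module ℝ V] [AddCommGroup h] [Module ℝ h]
    [AddCommGroup l] [Module ℝ l]
    (pf : h →ₗ[ℝ] h →ₗ[ℝ] l)
    (Bh : h →ₗ[ℝ] h →ₗ[ℝ] ℝ) (Bl : l →ₗ[ℝ] l →ₗ[ℝ] ℝ)
    (hBhsymm : ∀ Y Y' : h, Bh Y Y' = Bh Y' Y)
    (hBlsymm : ∀ Z Z' : l, Bl Z Z' = Bl Z' Z)
    (η₁ η₂ : l →ₗ[ℝ] h →ₗ[ℝ] h)
    (hη₁ : ∀ (Y Y' : h) (Z : l), Bl (pf Y Y') Z = - Bh Y (η₁ Z Y'))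
    (hη₂ : ∀ (Y Y' : h) (Z : l), Bl (pf Y Y') Z = - Bh Y' (η₂ Z Y))
    {q t₁ t₂ : ℕ} (C : AlternatingMap ℝ V l (Fin q))
    (B₁ : AlternatingMap ℝ V h (Fin t₁)) (B₂ : AlternatingMap ℝ V h (Fin t₂)) :
    wedgeRaw Bl (wedgeRaw pf ⇑B₁ ⇑B₂) ⇑C
      = (-1 : ℝ) ^ (t₂ * q + 1) •
          castRaw (show t₁ + (q + t₂) = t₁ + t₂ + q by omega)
            (wedgeRaw Bh ⇑B₁ (wedgeRaw η₁ ⇑C ⇑B₂))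
    ∧ wedgeRaw Bl (wedgeRaw pf ⇑B₁ ⇑B₂) ⇑C
      = (-1 : ℝ) ^ (t₁ * (t₂ + q) + 1) •
          castRaw (show t₂ + (q + t₁) = t₁ + t₂ + q by omega)
            (wedgeRaw Bh ⇑B₂ (wedgeRaw η₂ ⇑C ⇑B₁)) := by
  classical
  have hB₁p : ∀ (u : Fin t₁ → V) (π : Equiv.Perm (Fin t₁)),
      (⇑B₁) (u ∘ π) = (Equiv.Perm.sign π : ℤ) • B₁ u := by
    intro u π; rw [AlternatingMap.map_perm, Units.smul_def]
  have hB₂p : ∀ (u : Fin t₂ → V) (π : Equiv.Perm (Fin t₂)),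
      (⇑B₂) (u ∘ π) = (Equiv.Perm.sign π : ℤ) • B₂ u := by
    intro u π; rw [AlternatingMap.map_perm, Units.smul_def]
  have hCp : ∀ (u : Fin q → V) (π : Equiv.Perm (Fin q)),
      (⇑C) (u ∘ π) = (Equiv.Perm.sign π : ℤ) • C u := by
    intro u π; rw [AlternatingMap.map_perm, Units.smul_def]
  have hK : t₁.factorial * t₂.factorial * q.factorial ≠ 0 :=
    Nat.mul_ne_zero (Nat.mul_ne_zero (Nat.factorial_ne_zero _) (Nat.factorial_ne_zero _))
      (Nat.factorial_ne_zero _)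
  constructor
  · -- first identity
    funext v
    have hqt : t₁ + (q + t₂) = t₁ + t₂ + q := by omega
    have key1 := S12.tripleL Bl pf ⇑B₁ ⇑B₂ ⇑C hB₁p hB₂p hCp v
    have key2 := S12.tripleR Bh η₁ ⇑B₁ ⇑C ⇑B₂ hB₁p hCp hB₂p (fun x => v (Fin.cast hqt x))
    have bridge : (∑ σ : Equiv.Perm (Fin (t₁ + t₂ + q)), (Equiv.Perm.sign σ : ℤ) •
          Bl (pf (B₁ fun i => v (σ (Fin.castAdd q (Fin.castAdd t₂ i))))
                 (B₂ fun j => v (σ (Fin.castAdd q (Fin.natAdd t₁ j)))))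
             (C fun k => v (σ (Fin.natAdd (t₁ + t₂) k))))
        = (-1 : ℝ) ^ (t₂ * q + 1) •
          ∑ σ : Equiv.Perm (Fin (t₁ + (q + t₂))), (Equiv.Perm.sign σ : ℤ) •
            Bh (B₁ fun i => (fun x => v (Fin.cast hqt x)) (σ (Fin.castAdd (q + t₂) i)))
               (η₁ (C fun j => (fun x => v (Fin.cast hqt x)) (σ (Fin.natAdd t₁ (Fin.castAdd t₂ j))))
                   (B₂ fun k => (fun x => v (Fin.cast hqt x)) (σ (Fin.natAdd t₁ (Fin.natAdd q k))))) := by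
      rw [Finset.smul_sum]
      apply S12.sum_reindex hqt (S12.u₁ q t₁ t₂)
      intro σ
      have harg1 : (fun i => v (((finCongr hqt).permCongr σ * S12.u₁ q t₁ t₂)
            (Fin.castAdd q (Fin.castAdd t₂ i))))
          = fun i => v (Fin.cast hqt (σ (Fin.castAdd (q + t₂) i))) := by
        funext i
        rw [Equiv.Perm.mul_apply, S12.u₁_block1, Equiv.permCongr_apply, S12.symm_cast]
        rfl
      have harg2 : (fun j => v (((finCongr hqt).permCongr σ * S12.u₁ q t₁ t₂)
            (Fin.castAdd q (Fin.natAdd t₁ j))))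
          = fun j => v (Fin.cast hqt (σ (Fin.natAdd t₁ (Fin.natAdd q j)))) := by
        funext j
        rw [Equiv.Perm.mul_apply, S12.u₁_block2, Equiv.permCongr_apply, S12.symm_cast]
        rfl
      have harg3 : (fun k => v (((finCongr hqt).permCongr σ * S12.u₁ q t₁ t₂)
            (Fin.natAdd (t₁ + t₂) k)))
          = fun k => v (Fin.cast hqt (σ (Fin.natAdd t₁ (Fin.castAdd t₂ k)))) := by
        funext k
        rw [Equiv.Perm.mul_apply, S12.u₁_block3, Equiv.permCongr_apply, S12.symm_cast]
        rfl
      rw [harg1, harg2, harg3, Equiv.Perm.sign_mul, Equiv.Perm.sign_permCongr, S12.sign_u₁]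
      rw [show Bh (B₁ fun i => v (Fin.cast hqt (σ (Fin.castAdd (q + t₂) i))))
            (η₁ (C fun j => v (Fin.cast hqt (σ (Fin.natAdd t₁ (Fin.castAdd t₂ j)))))
                (B₂ fun k => v (Fin.cast hqt (σ (Fin.natAdd t₁ (Fin.natAdd q k))))))
          = - Bl (pf (B₁ fun i => v (Fin.cast hqt (σ (Fin.castAdd (q + t₂) i))))
                     (B₂ fun k => v (Fin.cast hqt (σ (Fin.natAdd t₁ (Fin.natAdd q k))))))
               (C fun j => v (Fin.cast hqt (σ (Fin.natAdd t₁ (Fin.castAdd t₂ j)))))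
        from by
          have hx := hη₁ (B₁ fun i => v (Fin.cast hqt (σ (Fin.castAdd (q + t₂) i))))
            (B₂ fun k => v (Fin.cast hqt (σ (Fin.natAdd t₁ (Fin.natAdd q k)))))
            (C fun j => v (Fin.cast hqt (σ (Fin.natAdd t₁ (Fin.castAdd t₂ j)))))
          linarith]
      rcases Int.units_eq_one_or (Equiv.Perm.sign σ) with h2 | h2 <;>
        simp only [h2, Units.val_mul, Units.val_one, Units.val_pow_eq_pow_val, Units.val_neg,
          one_mul, neg_mul, zsmul_eq_mul, smul_eq_mul] <;>
        push_cast <;>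
        ring
    apply S12.nsmul_cancel hK
    rw [key1, bridge, Pi.smul_apply, smul_comm]
    congr 1
    rw [show t₁.factorial * t₂.factorial * q.factorial
      = t₁.factorial * q.factorial * t₂.factorial from by ring]
    exact key2.symm
  · -- second identity
    funext v
    have hqt : t₂ + (q + t₁) = t₁ + t₂ + q := by omega
    have key1 := S12.tripleL Bl pf ⇑B₁ ⇑B₂ ⇑C hB₁p hB₂p hCp v
    have key2 := S12.tripleR Bh η₂ ⇑B₂ ⇑C ⇑B₁ hB₂p hCp hB₁p (fun x => v (Fin.cast hqt x))
    have bridge : (∑ σ : Equiv.Perm (Fin (t₁ + t₂ + q)), (Equiv.Perm.sign σ : ℤ) •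
          Bl (pf (B₁ fun i => v (σ (Fin.castAdd q (Fin.castAdd t₂ i))))
                 (B₂ fun j => v (σ (Fin.castAdd q (Fin.natAdd t₁ j)))))
             (C fun k => v (σ (Fin.natAdd (t₁ + t₂) k))))
        = (-1 : ℝ) ^ (t₁ * (t₂ + q) + 1) •
          ∑ σ : Equiv.Perm (Fin (t₂ + (q + t₁))), (Equiv.Perm.sign σ : ℤ) •
            Bh (B₂ fun i => (fun x => v (Fin.cast hqt x)) (σ (Fin.castAdd (q + t₁) i)))
               (η₂ (C fun j => (fun x => v (Fin.cast hqt x)) (σ (Fin.natAdd t₂ (Fin.castAdd t₁ j))))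
                   (B₁ fun k => (fun x => v (Fin.cast hqt x)) (σ (Fin.natAdd t₂ (Fin.natAdd q k))))) := by
      rw [Finset.smul_sum]
      apply S12.sum_reindex hqt (S12.u₂ q t₁ t₂)
      intro σ
      have harg1 : (fun i => v (((finCongr hqt).permCongr σ * S12.u₂ q t₁ t₂)
            (Fin.castAdd q (Fin.castAdd t₂ i))))
          = fun i => v (Fin.cast hqt (σ (Fin.natAdd t₂ (Fin.natAdd q i)))) := by
        funext i
        rw [Equiv.Perm.mul_apply, S12.u₂_block1, Equiv.permCongr_apply, S12.symm_cast]
        rfl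
      have harg2 : (fun j => v (((finCongr hqt).permCongr σ * S12.u₂ q t₁ t₂)
            (Fin.castAdd q (Fin.natAdd t₁ j))))
          = fun j => v (Fin.cast hqt (σ (Fin.castAdd (q + t₁) j))) := by
        funext j
        rw [Equiv.Perm.mul_apply, S12.u₂_block2, Equiv.permCongr_apply, S12.symm_cast]
        rfl
      have harg3 : (fun k => v (((finCongr hqt).permCongr σ * S12.u₂ q t₁ t₂)
            (Fin.natAdd (t₁ + t₂) k)))
          = fun k => v (Fin.cast hqt (σ (Fin.natAdd t₂ (Fin.castAdd t₁ k)))) := by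
        funext k
        rw [Equiv.Perm.mul_apply, S12.u₂_block3, Equiv.permCongr_apply, S12.symm_cast]
        rfl
      rw [harg1, harg2, harg3, Equiv.Perm.sign_mul, Equiv.Perm.sign_permCongr, S12.sign_u₂]
      rw [show Bh (B₂ fun i => v (Fin.cast hqt (σ (Fin.castAdd (q + t₁) i))))
            (η₂ (C fun j => v (Fin.cast hqt (σ (Fin.natAdd t₂ (Fin.castAdd t₁ j)))))
                (B₁ fun k => v (Fin.cast hqt (σ (Fin.natAdd t₂ (Fin.natAdd q k))))))
          = - Bl (pf (B₁ fun k => v (Fin.cast hqt (σ (Fin.natAdd t₂ (Fin.natAdd q k)))))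
                     (B₂ fun i => v (Fin.cast hqt (σ (Fin.castAdd (q + t₁) i)))))
               (C fun j => v (Fin.cast hqt (σ (Fin.natAdd t₂ (Fin.castAdd t₁ j)))))
        from by
          have hx := hη₂ (B₁ fun k => v (Fin.cast hqt (σ (Fin.natAdd t₂ (Fin.natAdd q k)))))
            (B₂ fun i => v (Fin.cast hqt (σ (Fin.castAdd (q + t₁) i))))
            (C fun j => v (Fin.cast hqt (σ (Fin.natAdd t₂ (Fin.castAdd t₁ j)))))
          linarith]
      rcases Int.units_eq_one_or (Equiv.Perm.sign σ) with h2 | h2 <;>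
        simp only [h2, Units.val_mul, Units.val_one, Units.val_pow_eq_pow_val, Units.val_neg,
          one_mul, neg_mul, zsmul_eq_mul, smul_eq_mul] <;>
        push_cast <;>
        ring
    apply S12.nsmul_cancel hK
    rw [key1, bridge, Pi.smul_apply, smul_comm]
    congr 1
    rw [show t₁.factorial * t₂.factorial * q.factorial
      = t₂.factorial * q.factorial * t₁.factorial from by ring]
    exact key2.symm
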